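/- Let 0<q<1 and let m ≥ 2 be an integer. Then 2ζ[m,1] = m ζ[m+1] + (1−q)(m−2) ζ[m] − Σ_{k=1}^{m-2} ζ[m−k] ζ[k+1]. -/

import Mathlib

/-- The `q`-analog of a natural number: `[k]_q = (1-q^k)/(1-q)`. -/
noncomputable def qnum (q : ℝ) (k : ℕ) : ℝ := (1 - q ^ k) / (1 - q)

/-- The single `q`-zeta value `ζ[n] = Σ_{k≥1} q^{(n-1)k}/[k]_q^n`. -/
noncomputable def qzeta (q : ℝ) (n : ℕ) : ℝ :=
  ∑' k : ℕ, q ^ ((n - 1) * (k + 1)) / (qnum q (k + 1)) ^ n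

/-- The double `q`-zeta value
`ζ[a,b] = Σ_{k₁>k₂>0} (q^{(a-1)k₁}/[k₁]_q^a)(q^{(b-1)k₂}/[k₂]_q^b)`. -/
noncomputable def qzeta2 (q : ℝ) (a b : ℕ) : ℝ :=
  ∑' p : {p : ℕ × ℕ // p.2 < p.1 ∧ 0 < p.2},
    (q ^ ((a - 1) * p.1.1) / (qnum q p.1.1) ^ a) *
      (q ^ ((b - 1) * p.1.2) / (qnum q p.1.2) ^ b)

namespace QE
variable {q : ℝ}

/-- the basic term -/
noncomputable def tt (q : ℝ) (n k : ℕ) : ℝ := q ^ ((n - 1) * k) / (qnum q k) ^ n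

lemma qnum_pos (hq0 : 0 < q) (hq1 : q < 1) {k : ℕ} (hk : 0 < k) : 0 < qnum q k := by
  have : q ^ k < 1 := pow_lt_one₀ hq0.le hq1 hk.ne'
  have h1 : (0:ℝ) < 1 - q := by linarith
  exact div_pos (by linarith) h1

lemma qnum_nonneg (hq0 : 0 < q) (hq1 : q < 1) (k : ℕ) : 0 ≤ qnum q k := by
  have : q ^ k ≤ 1 := pow_le_one₀ hq0.le hq1.le
  exact div_nonneg (by linarith) (by linarith)

lemma one_le_qnum (hq0 : 0 < q) (hq1 : q < 1) {k : ℕ} (hk : 0 < k) : 1 ≤ qnum q k := by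
  have h1 : (0:ℝ) < 1 - q := by linarith
  rw [qnum, le_div_iff₀ h1]
  have : q ^ k ≤ q ^ 1 := pow_le_pow_of_le_one hq0.le hq1.le hk
  simpa using by linarith

lemma qnum_ne (hq0 : 0 < q) (hq1 : q < 1) {k : ℕ} (hk : 0 < k) : qnum q k ≠ 0 :=
  (qnum_pos hq0 hq1 hk).ne'

lemma one_sub_mul_qnum (hq1 : q < 1) (k : ℕ) : (1 - q) * qnum q k = 1 - q ^ k := by
  have h : (1:ℝ) - q ≠ 0 := by intro h; nlinarith [h]
  rw [qnum]; field_simp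

lemma qnum_add (hq1 : q < 1) (k l : ℕ) : qnum q (k + l) = qnum q k + q ^ k * qnum q l := by
  rw [qnum, qnum, qnum, pow_add]
  have : (1:ℝ) - q ≠ 0 := by intro h; nlinarith [h]
  field_simp; ring

lemma tt_nonneg (hq0 : 0 < q) (hq1 : q < 1) (n k : ℕ) : 0 ≤ tt q n k :=
  div_nonneg (pow_nonneg hq0.le _) (pow_nonneg (qnum_nonneg hq0 hq1 k) _)

lemma tt_le (hq0 : 0 < q) (hq1 : q < 1) {n k : ℕ} (hk : 0 < k) :
    tt q n k ≤ q ^ ((n - 1) * k) :=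
  div_le_self (pow_nonneg hq0.le _) (one_le_pow₀ (one_le_qnum hq0 hq1 hk))

lemma tt_pos (hq0 : 0 < q) (hq1 : q < 1) {n k : ℕ} (hk : 0 < k) : 0 < tt q n k :=
  div_pos (pow_pos hq0 _) (pow_pos (qnum_pos hq0 hq1 hk) _)

-- summability helpers
lemma summable_geom_aux (hq0 : 0 < q) (hq1 : q < 1) {f : ℕ → ℝ} (C : ℝ)
    (h0 : ∀ k, 0 ≤ f k) (hle : ∀ k, f k ≤ C * q ^ k) : Summable f :=
  Summable.of_nonneg_of_le h0 hle ((summable_geometric_of_lt_one hq0.le hq1).mul_left C)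

lemma summable_mul_geom_aux (hq0 : 0 < q) (hq1 : q < 1) {f : ℕ → ℝ} (C : ℝ)
    (h0 : ∀ k, 0 ≤ f k) (hle : ∀ k, f k ≤ C * ((k:ℝ)+1) * q ^ k) : Summable f := by
  refine Summable.of_nonneg_of_le h0 hle ?_
  have h1 : Summable (fun k : ℕ => ((k:ℝ)+1) * q ^ k) := by
    have := summable_pow_mul_geometric_of_norm_lt_one (R := ℝ) 1 (r := q)
      (by rw [Real.norm_eq_abs, abs_of_pos hq0]; exact hq1)
    have h2 : Summable (fun k : ℕ => (k:ℝ) * q ^ k) := by simpa using this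
    simpa [add_mul] using h2.add (summable_geometric_of_lt_one hq0.le hq1)
  simpa [mul_assoc] using h1.mul_left C

lemma summable_prod_geom (hq0 : 0 < q) (hq1 : q < 1) :
    Summable (fun p : ℕ × ℕ => q ^ p.1 * q ^ p.2) := by
  have hg := summable_geometric_of_lt_one hq0.le hq1
  exact hg.mul_of_nonneg hg (fun k => pow_nonneg hq0.le k) (fun k => pow_nonneg hq0.le k)

lemma summable2_aux (hq0 : 0 < q) (hq1 : q < 1) {f : ℕ × ℕ → ℝ} (C : ℝ)
    (h0 : ∀ p, 0 ≤ f p) (hle : ∀ p, f p ≤ C * (q ^ p.1 * q ^ p.2)) : Summable f :=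
  Summable.of_nonneg_of_le h0 hle ((summable_prod_geom hq0 hq1).mul_left C)

/-- summability on the region `p.2 < p.1` with only a `q^p.1` bound -/
lemma summable2_region (hq0 : 0 < q) (hq1 : q < 1) {f : ℕ × ℕ → ℝ} {C : ℝ} (hC : 0 ≤ C)
    (h0 : ∀ p, 0 ≤ f p) (hle : ∀ p, f p ≤ C * q ^ p.1)
    (hsupp : ∀ p : ℕ × ℕ, ¬ p.2 < p.1 → f p = 0) : Summable f := by
  set r := Real.sqrt q with hr
  have hr0 : 0 < r := Real.sqrt_pos.2 hq0
  have hrr : r * r = q := Real.mul_self_sqrt hq0.le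
  have hr1 : r < 1 := by nlinarith
  refine summable2_aux hr0 hr1 C h0 (fun p => ?_)
  by_cases hp : p.2 < p.1
  · refine le_trans (hle p) ?_
    have hq : q ^ p.1 = r ^ p.1 * r ^ p.1 := by rw [← mul_pow, hrr]
    have h2 : r ^ p.1 ≤ r ^ p.2 := pow_le_pow_of_le_one hr0.le hr1.le hp.le
    rw [hq]
    have := pow_nonneg hr0.le p.1
    exact mul_le_mul_of_nonneg_left (mul_le_mul_of_nonneg_left h2 this) hC
  · rw [hsupp p hp]
    have := pow_nonneg hr0.le p.1
    have := pow_nonneg hr0.le p.2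
    positivity

lemma tt_le_one (hq0 : 0 < q) (hq1 : q < 1) (n k : ℕ) : tt q n (k + 1) ≤ 1 :=
  le_trans (tt_le hq0 hq1 (Nat.succ_pos k)) (pow_le_one₀ hq0.le hq1.le)

lemma tt_le_geom (hq0 : 0 < q) (hq1 : q < 1) {n : ℕ} (hn : 2 ≤ n) (k : ℕ) :
    tt q n (k + 1) ≤ q ^ k := by
  refine le_trans (tt_le hq0 hq1 (Nat.succ_pos k)) ?_
  refine pow_le_pow_of_le_one hq0.le hq1.le ?_
  calc k ≤ 1 * (k + 1) := by omega
  _ ≤ (n - 1) * (k + 1) := Nat.mul_le_mul_right _ (by omega)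

lemma summable_tt (hq0 : 0 < q) (hq1 : q < 1) {n : ℕ} (hn : 2 ≤ n) :
    Summable (fun k : ℕ => tt q n (k + 1)) :=
  summable_geom_aux hq0 hq1 1 (fun k => tt_nonneg hq0 hq1 n (k + 1))
    (fun k => by simpa using tt_le_geom hq0 hq1 hn k)

lemma qzeta_eq (n : ℕ) : qzeta q n = ∑' k : ℕ, tt q n (k + 1) := rfl

/-- Equivalence between `ℕ × ℕ` and the index set of `qzeta2`. -/
def regionEquiv : ℕ × ℕ ≃ {p : ℕ × ℕ // p.2 < p.1 ∧ 0 < p.2} where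
  toFun z := ⟨(z.1 + z.2 + 2, z.2 + 1), by constructor <;> omega⟩
  invFun x := (x.1.1 - x.1.2 - 1, x.1.2 - 1)
  left_inv z := by
    obtain ⟨a, b⟩ := z
    rw [Prod.mk.injEq]
    constructor <;> (simp only []; omega)
  right_inv x := by
    obtain ⟨⟨x1, x2⟩, h1, h2⟩ := x
    rw [Subtype.mk.injEq, Prod.mk.injEq]
    constructor <;> (simp only []; omega)

/-- `qzeta2` in `(l, k)` coordinates: smaller index `k = z.2 + 1`, larger `j = k + (z.1 + 1)`. -/
lemma qzeta2_eq' (a b : ℕ) :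
    qzeta2 q a b = ∑' z : ℕ × ℕ, tt q a (z.1 + z.2 + 2) * tt q b (z.2 + 1) := by
  rw [qzeta2, ← Equiv.tsum_eq regionEquiv]
  rfl

lemma qzeta2_eq (a b : ℕ) :
    qzeta2 q a b
      = ∑' p : ℕ × ℕ, if p.2 < p.1 then tt q a (p.1 + 1) * tt q b (p.2 + 1) else 0 := by
  rw [qzeta2_eq']
  refine Eq.trans ?_ (Function.Injective.tsum_eq (g := fun z : ℕ × ℕ => (z.1 + z.2 + 1, z.2))
    (by intro x y hxy; simp only [Prod.mk.injEq] at hxy; exact Prod.ext (by omega) (by omega))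
    ?_)
  · refine tsum_congr fun z => ?_
    rw [if_pos (show (z.1 + z.2 + 1, z.2).2 < (z.1 + z.2 + 1, z.2).1 by simp only []; omega)]
  · intro x hx
    rw [Function.mem_support] at hx
    have hxS : x.2 < x.1 := by by_contra h; rw [if_neg h] at hx; exact hx rfl
    exact ⟨(x.1 - x.2 - 1, x.2), Prod.ext (by simp only []; omega) rfl⟩

lemma summable_qzeta2_integrand (hq0 : 0 < q) (hq1 : q < 1) {a : ℕ} (ha : 2 ≤ a) (b : ℕ) :
    Summable (fun p : ℕ × ℕ =>
      if p.2 < p.1 then tt q a (p.1 + 1) * tt q b (p.2 + 1) else 0) := by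
  refine summable2_region hq0 hq1 (C := 1) (by norm_num) (fun p => ?_) (fun p => ?_) (fun p hp => if_neg hp)
  · by_cases hp : p.2 < p.1
    · rw [if_pos hp]
      exact mul_nonneg (tt_nonneg hq0 hq1 _ _) (tt_nonneg hq0 hq1 _ _)
    · rw [if_neg hp]
  · by_cases hp : p.2 < p.1
    · rw [if_pos hp, one_mul]
      calc tt q a (p.1 + 1) * tt q b (p.2 + 1)
          ≤ q ^ p.1 * 1 := mul_le_mul (tt_le_geom hq0 hq1 ha p.1) (tt_le_one hq0 hq1 b p.2)
            (tt_nonneg hq0 hq1 _ _) (pow_nonneg hq0.le _)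
        _ = q ^ p.1 := mul_one _
    · rw [if_neg hp, one_mul]; exact pow_nonneg hq0.le _

lemma tt_mul_tt_diag (hq0 : 0 < q) (hq1 : q < 1) (a' b' k : ℕ) :
    tt q (a' + 1) (k + 1) * tt q (b' + 1) (k + 1)
      = tt q (a' + b' + 2) (k + 1) + (1 - q) * tt q (a' + b' + 1) (k + 1) := by
  have key : ∀ x B : ℝ, B ≠ 0 → (1 - q) * B = 1 - x →
      x^a'/B^(a'+1) * (x^b'/B^(b'+1))
        = x^(a'+b'+1)/B^(a'+b'+2) + (1-q)*(x^(a'+b')/B^(a'+b'+1)) := by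
    intro x B hB hx
    field_simp
    linear_combination (- x^a'*x^b'*B^3*B^(a'*2)*B^(b'*2)) * hx
  have e1 : ∀ c : ℕ, q ^ (c * (k + 1)) = (q ^ (k + 1)) ^ c := fun c => by
    rw [← pow_mul, mul_comm]
  simp only [tt, Nat.add_sub_cancel]
  rw [e1, e1, e1, e1]
  exact key _ _ (qnum_ne hq0 hq1 (Nat.succ_pos k)) (one_sub_mul_qnum hq1 (k + 1))

lemma stuffle (hq0 : 0 < q) (hq1 : q < 1) {a b : ℕ} (ha : 2 ≤ a) (hb : 2 ≤ b) :
    qzeta q a * qzeta q b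
      = qzeta2 q a b + qzeta2 q b a + qzeta q (a + b) + (1 - q) * qzeta q (a + b - 1) := by
  have hsa := summable_tt hq0 hq1 ha
  have hsb := summable_tt hq0 hq1 hb
  set F : ℕ × ℕ → ℝ := fun p => tt q a (p.1 + 1) * tt q b (p.2 + 1) with hF
  have hF0 : ∀ p, 0 ≤ F p := fun p => mul_nonneg (tt_nonneg hq0 hq1 _ _) (tt_nonneg hq0 hq1 _ _)
  have hFs : Summable F := by
    refine summable2_aux hq0 hq1 1 hF0 (fun p => ?_)
    rw [one_mul]
    exact mul_le_mul (tt_le_geom hq0 hq1 ha p.1) (tt_le_geom hq0 hq1 hb p.2)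
      (tt_nonneg hq0 hq1 _ _) (pow_nonneg hq0.le _)
  -- the three pieces
  set F1 : ℕ × ℕ → ℝ := fun p => if p.2 < p.1 then F p else 0 with hF1
  set F2 : ℕ × ℕ → ℝ := fun p => if p.1 < p.2 then F p else 0 with hF2
  set F3 : ℕ × ℕ → ℝ := fun p => if p.1 = p.2 then F p else 0 with hF3
  have hle : ∀ (G : ℕ × ℕ → ℝ), (∀ p, G p = F p ∨ G p = 0) → Summable G := by
    intro G hG
    refine Summable.of_nonneg_of_le (fun p => ?_) (fun p => ?_) hFs <;>
      rcases hG p with h | h <;> rw [h]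
    · exact hF0 p
    · exact hF0 p
  have hs1 : Summable F1 := hle F1 (fun p => by by_cases h : p.2 < p.1 <;> simp [hF1, h])
  have hs2 : Summable F2 := hle F2 (fun p => by by_cases h : p.1 < p.2 <;> simp [hF2, h])
  have hs3 : Summable F3 := hle F3 (fun p => by by_cases h : p.1 = p.2 <;> simp [hF3, h])
  have hsplit : ∀ p, F p = F1 p + F2 p + F3 p := by
    intro p
    simp only [hF1, hF2, hF3]
    rcases lt_trichotomy p.1 p.2 with h | h | h
    · rw [if_neg (by omega), if_pos h, if_neg (by omega)]; ring
    · rw [if_neg (by omega), if_neg (by omega), if_pos h]; ring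
    · rw [if_pos h, if_neg (by omega), if_neg (by omega)]; ring
  have hprod : qzeta q a * qzeta q b = ∑' p : ℕ × ℕ, F p := by
    rw [qzeta_eq, qzeta_eq]
    exact tsum_mul_tsum_of_summable_norm
      (by simpa [Real.norm_eq_abs, abs_of_nonneg (tt_nonneg hq0 hq1 _ _)] using hsa)
      (by simpa [Real.norm_eq_abs, abs_of_nonneg (tt_nonneg hq0 hq1 _ _)] using hsb)
  have hsum3 : ∑' p, F p = (∑' p, F1 p) + (∑' p, F2 p) + (∑' p, F3 p) := by
    rw [tsum_congr hsplit, Summable.tsum_add (hs1.add hs2) hs3, Summable.tsum_add hs1 hs2]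
  -- identify the three pieces
  have hp1 : ∑' p, F1 p = qzeta2 q a b := (qzeta2_eq a b).symm
  have hp2 : ∑' p, F2 p = qzeta2 q b a := by
    rw [qzeta2_eq b a]
    refine Eq.trans (tsum_congr (fun p => ?_))
      (Equiv.tsum_eq (Equiv.prodComm ℕ ℕ)
        (fun p => if p.2 < p.1 then tt q b (p.1 + 1) * tt q a (p.2 + 1) else 0))
    simp only [hF2, hF, Equiv.prodComm_apply, Prod.fst_swap, Prod.snd_swap]
    by_cases h : p.1 < p.2
    · rw [if_pos h]; simp [h, mul_comm]
    · rw [if_neg h]; simp [h]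
  have hdiag : ∀ k : ℕ, F (k, k) = tt q (a + b) (k + 1) + (1 - q) * tt q (a + b - 1) (k + 1) := by
    intro k
    obtain ⟨a', rfl⟩ : ∃ a', a = a' + 1 := ⟨a - 1, by omega⟩
    obtain ⟨b', rfl⟩ : ∃ b', b = b' + 1 := ⟨b - 1, by omega⟩
    have h1 : a' + 1 + (b' + 1) = a' + b' + 2 := by omega
    have h2 : a' + 1 + (b' + 1) - 1 = a' + b' + 1 := by omega
    rw [h2, h1]
    exact tt_mul_tt_diag hq0 hq1 a' b' k
  have hp3 : ∑' p, F3 p = qzeta q (a + b) + (1 - q) * qzeta q (a + b - 1) := by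
    have hinj : Function.Injective (fun k : ℕ => ((k, k) : ℕ × ℕ)) := by
      intro x y hxy; simp only [Prod.mk.injEq] at hxy; exact hxy.1
    have hrange : Function.support F3 ⊆ Set.range (fun k : ℕ => ((k, k) : ℕ × ℕ)) := by
      intro x hx
      rw [Function.mem_support] at hx
      have : x.1 = x.2 := by
        by_contra h; rw [hF3] at hx; simp only [if_neg h] at hx; exact hx rfl
      exact ⟨x.1, Prod.ext rfl this⟩
    have h0 : ∑' p, F3 p = ∑' k : ℕ, F3 (k, k) :=
      (Function.Injective.tsum_eq hinj hrange).symm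
    have h1 : ∀ k : ℕ, F3 (k, k) = tt q (a + b) (k + 1) + (1 - q) * tt q (a + b - 1) (k + 1) := by
      intro k
      rw [hF3]; simp only [if_pos rfl]; exact hdiag k
    rw [h0, tsum_congr h1, Summable.tsum_add (summable_tt hq0 hq1 (by omega))
      ((summable_tt hq0 hq1 (n := a + b - 1) (by omega)).mul_left (1 - q)),
      tsum_mul_left, qzeta_eq, qzeta_eq]
  rw [hprod, hsum3, hp1, hp2, hp3]
  ring

lemma key_base (x y A B C : ℝ) (hA : A ≠ 0) (hB : B ≠ 0) (hC : C ≠ 0) (h : A = C + y*B) :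
    x*y/A^2 * (1/B) = x*y/(A*B*C) - x*y^2/(A^2*C) := by
  subst h
  field_simp
  ring

lemma key_step (v : ℕ) (x y A B C : ℝ) (hA : A ≠ 0) (hB : B ≠ 0) (hC : C ≠ 0)
    (h : A = C + y*B) :
    (x/B) * (x^(v+1)*y/(A*B^(v+1)*C) - x^(v+1)*y^(v+2)/(A^(v+2)*C))
      + (x^(v+2)*y^(v+2))/(A^(v+3)*B)
    = x^(v+2)*y/(A*B^(v+2)*C) - x^(v+2)*y^(v+3)/(A^(v+3)*C) := by
  field_simp
  subst h
  ring

lemma qnum_rel (hq1 : q < 1) (k l : ℕ) :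
    qnum q (k + l + 2) = qnum q (l + 1) + q^(l+1) * qnum q (k + 1) := by
  have h := qnum_add hq1 (l + 1) (k + 1)
  rw [show l + 1 + (k + 1) = k + l + 2 by omega] at h
  exact h

lemma tt_one (k : ℕ) : tt q 1 (k + 1) = 1 / qnum q (k + 1) := by
  simp [tt]

/-- `tt` in terms of powers of `q^j`: `tt q (n+1) j = (q^j)^n / (qnum q j)^(n+1)` -/
lemma tt_pow (n j : ℕ) : tt q (n + 1) j = (q ^ j) ^ n / (qnum q j) ^ (n + 1) := by
  rw [tt, Nat.add_sub_cancel, ← pow_mul, mul_comm]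

lemma tt_succ (n' k : ℕ) :
    tt q (n' + 2) (k + 1) = q ^ (k + 1) / qnum q (k + 1) * tt q (n' + 1) (k + 1) := by
  rw [tt_pow, show n' + 2 = (n' + 1) + 1 by omega, tt_pow]
  rw [div_mul_div_comm, pow_succ, pow_succ]
  ring

/-- The geometric-sum kernel of the q-sum theorem. -/
lemma geom_core (hq0 : 0 < q) (hq1 : q < 1) (k l : ℕ) : ∀ v : ℕ,
    ∑ i ∈ Finset.range (v+1), tt q (2+i) (k+l+2) * tt q (v+1-i) (k+1)
      = (q^(k+1))^(v+1) * q^(l+1)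
          / (qnum q (k+l+2) * qnum q (k+1)^(v+1) * qnum q (l+1))
        - (q^(k+1))^(v+1) * (q^(l+1))^(v+2)
          / (qnum q (k+l+2)^(v+2) * qnum q (l+1)) := by
  have hA : qnum q (k+l+2) ≠ 0 := qnum_ne hq0 hq1 (by omega)
  have hB : qnum q (k+1) ≠ 0 := qnum_ne hq0 hq1 (by omega)
  have hC : qnum q (l+1) ≠ 0 := qnum_ne hq0 hq1 (by omega)
  have hrel := qnum_rel hq1 (q := q) k l
  intro v
  induction v with
  | zero =>
    rw [Finset.sum_range_one, tt_one]
    have h2 : tt q (2+0) (k+l+2) = q^(k+1) * q^(l+1) / (qnum q (k+l+2))^2 := by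
      rw [show (2:ℕ)+0 = 1+1 by rfl, tt_pow, pow_one, ← pow_add,
        show k+1+(l+1) = k+l+2 by omega]
    rw [h2]
    have := key_base (q^(k+1)) (q^(l+1)) (qnum q (k+l+2)) (qnum q (k+1)) (qnum q (l+1))
      hA hB hC hrel
    simpa using this
  | succ v ih =>
    rw [Finset.sum_range_succ]
    have hlast : tt q (2+(v+1)) (k+l+2) * tt q (v+1+1-(v+1)) (k+1)
        = (q^(k+1))^(v+2) * (q^(l+1))^(v+2) / ((qnum q (k+l+2))^(v+3) * qnum q (k+1)) := by
      rw [show 2+(v+1) = (v+2)+1 by omega, show v+1+1-(v+1) = 1 by omega, tt_pow, tt_one]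
      rw [show (q:ℝ)^(k+l+2) = q^(k+1) * q^(l+1) by rw [← pow_add]; congr 1; omega]
      rw [mul_pow, div_mul_div_comm, mul_one, show (v+2)+1 = v+3 by omega]
    have hmain : ∑ i ∈ Finset.range (v+1), tt q (2+i) (k+l+2) * tt q (v+1+1-i) (k+1)
        = q^(k+1) / qnum q (k+1)
            * ∑ i ∈ Finset.range (v+1), tt q (2+i) (k+l+2) * tt q (v+1-i) (k+1) := by
      rw [Finset.mul_sum]
      refine Finset.sum_congr rfl fun i hi => ?_
      rw [Finset.mem_range] at hi
      rw [show v+1+1-i = (v-i)+2 by omega, show v+1-i = (v-i)+1 by omega, tt_succ]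
      ring
    rw [hlast, hmain, ih]
    have := key_step v (q^(k+1)) (q^(l+1)) (qnum q (k+l+2)) (qnum q (k+1)) (qnum q (l+1))
      hA hB hC hrel
    calc q^(k+1) / qnum q (k+1) * ((q^(k+1))^(v+1) * q^(l+1)
            / (qnum q (k+l+2) * qnum q (k+1)^(v+1) * qnum q (l+1))
          - (q^(k+1))^(v+1) * (q^(l+1))^(v+2) / (qnum q (k+l+2)^(v+2) * qnum q (l+1)))
        + (q^(k+1))^(v+2) * (q^(l+1))^(v+2) / ((qnum q (k+l+2))^(v+3) * qnum q (k+1))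
        = (q^(k+1))^(v+2) * q^(l+1)
            / (qnum q (k+l+2) * qnum q (k+1)^(v+2) * qnum q (l+1))
          - (q^(k+1))^(v+2) * (q^(l+1))^(v+3)
            / (qnum q (k+l+2)^(v+3) * qnum q (l+1)) := this
      _ = _ := by norm_num

/-- `cf q i = q^(i+1)/[i+1] = 1/[i+1] - (1-q)` -/
noncomputable def cf (q : ℝ) (i : ℕ) : ℝ := q ^ (i + 1) / qnum q (i + 1)

lemma cf_eq (hq0 : 0 < q) (hq1 : q < 1) (i : ℕ) :
    cf q i = 1 / qnum q (i + 1) - (1 - q) := by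
  have hB : qnum q (i+1) ≠ 0 := qnum_ne hq0 hq1 (by omega)
  have h := one_sub_mul_qnum (q := q) hq1 (i + 1)
  rw [cf]
  field_simp
  linarith [h]

lemma cf_nonneg (hq0 : 0 < q) (hq1 : q < 1) (i : ℕ) : 0 ≤ cf q i :=
  div_nonneg (pow_nonneg hq0.le _) (qnum_nonneg hq0 hq1 _)

lemma cf_le (hq0 : 0 < q) (hq1 : q < 1) (i : ℕ) : cf q i ≤ q ^ i := by
  calc cf q i ≤ q ^ (i+1) := div_le_self (pow_nonneg hq0.le _) (one_le_qnum hq0 hq1 (by omega))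
    _ ≤ q ^ i := pow_le_pow_of_le_one hq0.le hq1.le (by omega)

lemma summable_cf (hq0 : 0 < q) (hq1 : q < 1) : Summable (cf q) :=
  summable_geom_aux hq0 hq1 1 (cf_nonneg hq0 hq1) (fun i => by simpa using cf_le hq0 hq1 i)

/-- telescoping evaluation -/
lemma telescope (hq0 : 0 < q) (hq1 : q < 1) (k : ℕ) :
    ∑' l : ℕ, (1 / qnum q (l + 1) - 1 / qnum q (l + k + 2))
      = ∑ i ∈ Finset.range (k + 1), cf q i := by
  have hc := summable_cf hq0 hq1
  have hcs : Summable (fun l => cf q (l + (k + 1))) := (summable_nat_add_iff (k+1)).2 hc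
  have h1 : ∀ l : ℕ, 1 / qnum q (l + 1) - 1 / qnum q (l + k + 2)
      = cf q l - cf q (l + (k + 1)) := by
    intro l
    rw [cf_eq hq0 hq1, cf_eq hq0 hq1, show l + (k+1) + 1 = l + k + 2 by omega]
    ring
  rw [tsum_congr h1, Summable.tsum_sub hc hcs]
  have h2 := Summable.sum_add_tsum_nat_add (f := cf q) (k + 1) hc
  linarith [h2]

/-- per-point form of the first (`A`) piece -/
lemma pfA (hq0 : 0 < q) (hq1 : q < 1) (v k l : ℕ) :
    (q^(k+1))^(v+1) * q^(l+1) / (qnum q (k+l+2) * qnum q (k+1)^(v+1) * qnum q (l+1))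
      = tt q (v + 2) (k + 1) * (1 / qnum q (l + 1) - 1 / qnum q (k + l + 2)) := by
  have hA : qnum q (k+l+2) ≠ 0 := qnum_ne hq0 hq1 (by omega)
  have hB : qnum q (k+1) ≠ 0 := qnum_ne hq0 hq1 (by omega)
  have hC : qnum q (l+1) ≠ 0 := qnum_ne hq0 hq1 (by omega)
  have hrel := qnum_rel hq1 (q := q) k l
  rw [tt_pow]
  set x := q^(k+1); set y := q^(l+1)
  set A := qnum q (k+l+2); set B := qnum q (k+1); set C := qnum q (l+1)
  rw [hrel] at hA ⊢
  field_simp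
  ring

/-- per-point form of the second (`B`) piece -/
lemma pfB (hq0 : 0 < q) (hq1 : q < 1) (v k l : ℕ) :
    (q^(k+1))^(v+1) * (q^(l+1))^(v+2) / (qnum q (k+l+2)^(v+2) * qnum q (l+1))
      = tt q (v + 2) (k + l + 2) * cf q l := by
  have hnum : ((q:ℝ)^(k+1))^(v+1) * (q^(l+1))^(v+2)
      = (q^(k+l+2))^(v+1) * q^(l+1) := by
    rw [← pow_mul, ← pow_mul, ← pow_mul, ← pow_add, ← pow_add]
    congr 1
    ring
  rw [hnum, tt_pow, cf, div_mul_div_comm]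

/-- final per-point identity -/
lemma pfFin (hq0 : 0 < q) (hq1 : q < 1) (v k : ℕ) :
    tt q (v + 2) (k + 1) * cf q k = tt q (v + 3) (k + 1) := by
  rw [tt_pow, cf, show v + 3 = (v+2)+1 by omega, tt_pow, div_mul_div_comm,
    ← pow_succ, ← pow_succ]

lemma qnum_rel' (hq1 : q < 1) (k l : ℕ) :
    qnum q (k + l + 2) = qnum q (k + 1) + q^(k+1) * qnum q (l + 1) := by
  have h := qnum_add hq1 (k + 1) (l + 1)
  rw [show k + 1 + (l + 1) = k + l + 2 by omega] at h
  exact h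

lemma inv_qnum_diff (hq0 : 0 < q) (hq1 : q < 1) (k l : ℕ) :
    1 / qnum q (l + 1) - 1 / qnum q (k + l + 2)
      = q^(l+1) * qnum q (k+1) / (qnum q (l+1) * qnum q (k+l+2)) := by
  have hA : qnum q (k+l+2) ≠ 0 := qnum_ne hq0 hq1 (by omega)
  have hC : qnum q (l+1) ≠ 0 := qnum_ne hq0 hq1 (by omega)
  have hrel := qnum_rel hq1 (q := q) k l
  field_simp
  linear_combination hrel

lemma inv_qnum_diff_nonneg (hq0 : 0 < q) (hq1 : q < 1) (k l : ℕ) :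
    0 ≤ 1 / qnum q (l + 1) - 1 / qnum q (k + l + 2) := by
  rw [inv_qnum_diff hq0 hq1]
  have h1 := qnum_pos hq0 hq1 (show 0 < k+1 by omega)
  have h2 := qnum_pos hq0 hq1 (show 0 < l+1 by omega)
  have h3 := qnum_pos hq0 hq1 (show 0 < k+l+2 by omega)
  positivity

lemma inv_qnum_diff_le (hq0 : 0 < q) (hq1 : q < 1) (k l : ℕ) :
    1 / qnum q (l + 1) - 1 / qnum q (k + l + 2) ≤ q ^ l := by
  rw [inv_qnum_diff hq0 hq1]
  have h1 := qnum_pos hq0 hq1 (show 0 < k+1 by omega)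
  have h2 := one_le_qnum hq0 hq1 (show 0 < l+1 by omega)
  have h3 := qnum_pos hq0 hq1 (show 0 < k+l+2 by omega)
  have h2' := qnum_pos hq0 hq1 (show 0 < l+1 by omega)
  have hBA : qnum q (k+1) ≤ qnum q (k+l+2) := by
    have := qnum_rel' hq1 (q := q) k l
    nlinarith [qnum_nonneg hq0 hq1 (l+1), pow_pos hq0 (k+1)]
  calc q^(l+1) * qnum q (k+1) / (qnum q (l+1) * qnum q (k+l+2))
      ≤ q^(l+1) * qnum q (k+l+2) / (1 * qnum q (k+l+2)) := by
        gcongr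
    _ = q^(l+1) := by field_simp
    _ ≤ q ^ l := pow_le_pow_of_le_one hq0.le hq1.le (by omega)

/-- Summability of the generic double-sum integrand in `(l,k)` coordinates. -/
lemma summable_z (hq0 : 0 < q) (hq1 : q < 1) {a : ℕ} (ha : 2 ≤ a) (c : ℕ) :
    Summable (fun z : ℕ × ℕ => tt q a (z.1 + z.2 + 2) * tt q c (z.2 + 1)) := by
  refine summable2_aux hq0 hq1 1 (fun z => mul_nonneg (tt_nonneg hq0 hq1 _ _) (tt_nonneg hq0 hq1 _ _)) (fun z => ?_)
  rw [one_mul]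
  have h1 : tt q a (z.1 + z.2 + 2) ≤ q ^ (z.1 + z.2) := by
    have := tt_le hq0 hq1 (n := a) (k := z.1 + z.2 + 2) (by omega)
    refine le_trans this (pow_le_pow_of_le_one hq0.le hq1.le ?_)
    calc z.1 + z.2 ≤ 1 * (z.1 + z.2 + 2) := by omega
      _ ≤ (a - 1) * (z.1 + z.2 + 2) := Nat.mul_le_mul_right _ (by omega)
  calc tt q a (z.1 + z.2 + 2) * tt q c (z.2 + 1)
      ≤ q ^ (z.1 + z.2) * 1 := mul_le_mul h1 (tt_le_one hq0 hq1 _ _)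
        (tt_nonneg hq0 hq1 _ _) (pow_nonneg hq0.le _)
    _ = q ^ z.1 * q ^ z.2 := by rw [mul_one, pow_add]

lemma summable_g1 (hq0 : 0 < q) (hq1 : q < 1) (v : ℕ) :
    Summable (fun z : ℕ × ℕ =>
      tt q (v + 2) (z.2 + 1) * (1 / qnum q (z.1 + 1) - 1 / qnum q (z.1 + z.2 + 2))) := by
  refine summable2_aux hq0 hq1 1 (fun z => ?_) (fun z => ?_)
  · exact mul_nonneg (tt_nonneg hq0 hq1 _ _)
      (by rw [show z.1 + z.2 + 2 = z.2 + z.1 + 2 by omega]; exact inv_qnum_diff_nonneg hq0 hq1 z.2 z.1)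
  · rw [one_mul]
    have h2 : 1 / qnum q (z.1 + 1) - 1 / qnum q (z.1 + z.2 + 2) ≤ q ^ z.1 := by
      rw [show z.1 + z.2 + 2 = z.2 + z.1 + 2 by omega]
      exact inv_qnum_diff_le hq0 hq1 z.2 z.1
    have h0 : 0 ≤ 1 / qnum q (z.1 + 1) - 1 / qnum q (z.1 + z.2 + 2) := by
      rw [show z.1 + z.2 + 2 = z.2 + z.1 + 2 by omega]
      exact inv_qnum_diff_nonneg hq0 hq1 z.2 z.1
    calc tt q (v + 2) (z.2 + 1) * (1 / qnum q (z.1 + 1) - 1 / qnum q (z.1 + z.2 + 2))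
        ≤ q ^ z.2 * q ^ z.1 := mul_le_mul (tt_le_geom hq0 hq1 (by omega) z.2) h2 h0
          (pow_nonneg hq0.le _)
      _ = q ^ z.1 * q ^ z.2 := by ring

lemma summable_g2 (hq0 : 0 < q) (hq1 : q < 1) (v : ℕ) :
    Summable (fun z : ℕ × ℕ => tt q (v + 2) (z.1 + z.2 + 2) * cf q z.1) := by
  refine summable2_aux hq0 hq1 1 (fun z => mul_nonneg (tt_nonneg hq0 hq1 _ _) (cf_nonneg hq0 hq1 _)) (fun z => ?_)
  rw [one_mul]
  have h1 : tt q (v + 2) (z.1 + z.2 + 2) ≤ q ^ (z.1 + z.2) := by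
    refine le_trans (tt_le hq0 hq1 (by omega)) (pow_le_pow_of_le_one hq0.le hq1.le ?_)
    calc z.1 + z.2 ≤ 1 * (z.1 + z.2 + 2) := by omega
      _ ≤ (v + 2 - 1) * (z.1 + z.2 + 2) := Nat.mul_le_mul_right _ (by omega)
  calc tt q (v + 2) (z.1 + z.2 + 2) * cf q z.1
      ≤ q ^ (z.1 + z.2) * 1 := mul_le_mul h1 (le_trans (cf_le hq0 hq1 z.1) (pow_le_one₀ hq0.le hq1.le))
        (cf_nonneg hq0 hq1 _) (pow_nonneg hq0.le _)
    _ = q ^ z.1 * q ^ z.2 := by rw [mul_one, pow_add]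

lemma summable_tt_mul_sum (hq0 : 0 < q) (hq1 : q < 1) (v : ℕ) (m : ℕ → ℕ) (hm : ∀ k, m k ≤ k + 1) :
    Summable (fun k : ℕ => tt q (v + 2) (k + 1) * ∑ i ∈ Finset.range (m k), cf q i) := by
  refine summable_geom_aux hq0 hq1 (∑' i, cf q i) (fun k => ?_) (fun k => ?_)
  · exact mul_nonneg (tt_nonneg hq0 hq1 _ _)
      (Finset.sum_nonneg fun i _ => cf_nonneg hq0 hq1 i)
  · rw [mul_comm ((∑' i, cf q i)) (q ^ k)]
    refine mul_le_mul (tt_le_geom hq0 hq1 (by omega) k) ?_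
      (Finset.sum_nonneg fun i _ => cf_nonneg hq0 hq1 i) (pow_nonneg hq0.le _)
    exact Summable.sum_le_tsum _ (fun i _ => cf_nonneg hq0 hq1 i) (summable_cf hq0 hq1)

lemma summable_tt_mul_cf (hq0 : 0 < q) (hq1 : q < 1) (v : ℕ) :
    Summable (fun k : ℕ => tt q (v + 2) (k + 1) * cf q k) := by
  refine summable_geom_aux hq0 hq1 1 (fun k => mul_nonneg (tt_nonneg hq0 hq1 _ _) (cf_nonneg hq0 hq1 _)) (fun k => ?_)
  rw [one_mul]
  calc tt q (v + 2) (k + 1) * cf q k ≤ q ^ k * 1 :=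
      mul_le_mul (tt_le_geom hq0 hq1 (by omega) k)
        (le_trans (cf_le hq0 hq1 k) (pow_le_one₀ hq0.le hq1.le))
        (cf_nonneg hq0 hq1 _) (pow_nonneg hq0.le _)
    _ = q ^ k := mul_one _

lemma eval_g2 (hq0 : 0 < q) (hq1 : q < 1) (v : ℕ) :
    ∑' z : ℕ × ℕ, tt q (v + 2) (z.1 + z.2 + 2) * cf q z.1
      = ∑' j : ℕ, tt q (v + 2) (j + 1) * ∑ i ∈ Finset.range j, cf q i := by
  set F : ℕ × ℕ → ℝ := fun p => if p.2 < p.1 then tt q (v+2) (p.1+1) * cf q p.2 else 0 with hF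
  have hF0 : ∀ p, 0 ≤ F p := by
    intro p; rw [hF]; dsimp only
    split_ifs
    · exact mul_nonneg (tt_nonneg hq0 hq1 _ _) (cf_nonneg hq0 hq1 _)
    · exact le_rfl
  have hFs : Summable F := by
    refine summable2_region hq0 hq1 (C := 1) (by norm_num) hF0 (fun p => ?_)
      (fun p hp => by rw [hF]; exact if_neg hp)
    rw [hF]; dsimp only
    split_ifs
    · rw [one_mul]
      calc tt q (v+2) (p.1+1) * cf q p.2 ≤ q ^ p.1 * 1 :=
          mul_le_mul (tt_le_geom hq0 hq1 (by omega) p.1)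
            (le_trans (cf_le hq0 hq1 p.2) (pow_le_one₀ hq0.le hq1.le))
            (cf_nonneg hq0 hq1 _) (pow_nonneg hq0.le _)
        _ = q ^ p.1 := mul_one _
    · rw [one_mul]; exact pow_nonneg hq0.le _
  have hinj : ∑' z : ℕ × ℕ, F (z.1 + z.2 + 1, z.1) = ∑' p, F p := by
    refine Function.Injective.tsum_eq (g := fun z : ℕ × ℕ => (z.1 + z.2 + 1, z.1)) ?_ ?_
    · intro x y hxy; simp only [Prod.mk.injEq] at hxy; exact Prod.ext (by omega) (by omega)
    · intro x hx
      rw [Function.mem_support] at hx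
      have hxr : x.2 < x.1 := by
        by_contra h; rw [hF] at hx; simp only [if_neg h] at hx; exact hx rfl
      exact ⟨(x.2, x.1 - x.2 - 1), Prod.ext (by simp only []; omega) rfl⟩
  have hstep1 : ∀ z : ℕ × ℕ, F (z.1 + z.2 + 1, z.1)
      = tt q (v + 2) (z.1 + z.2 + 2) * cf q z.1 := by
    intro z; rw [hF]; dsimp only; rw [if_pos (by omega)]
  have hinner : ∀ j : ℕ, Summable fun i => F (j, i) := fun j =>
    summable_of_ne_finset_zero (s := Finset.range j)
      (fun i hi => by rw [hF]; exact if_neg (by simpa using hi))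
  calc ∑' z : ℕ × ℕ, tt q (v + 2) (z.1 + z.2 + 2) * cf q z.1
      = ∑' p : ℕ × ℕ, F p := by rw [← tsum_congr hstep1]; exact hinj
    _ = ∑' (j : ℕ) (i : ℕ), F (j, i) := Summable.tsum_prod' hFs hinner
    _ = ∑' j : ℕ, tt q (v + 2) (j + 1) * ∑ i ∈ Finset.range j, cf q i := by
        refine tsum_congr fun j => ?_
        have hin : ∑' i : ℕ, F (j, i) = ∑ i ∈ Finset.range j, F (j, i) :=
          tsum_eq_sum (fun i hi => by
            rw [hF]; exact if_neg (by simpa using hi))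
        rw [hin, Finset.mul_sum]
        refine Finset.sum_congr rfl fun i hi => ?_
        rw [hF]; dsimp only; rw [if_pos (Finset.mem_range.1 hi)]

lemma eval_g1 (hq0 : 0 < q) (hq1 : q < 1) (v : ℕ) :
    ∑' z : ℕ × ℕ, tt q (v + 2) (z.2 + 1) * (1 / qnum q (z.1 + 1) - 1 / qnum q (z.1 + z.2 + 2))
      = ∑' k : ℕ, tt q (v + 2) (k + 1) * ∑ i ∈ Finset.range (k + 1), cf q i := by
  set g : ℕ × ℕ → ℝ := fun z =>
    tt q (v + 2) (z.2 + 1) * (1 / qnum q (z.1 + 1) - 1 / qnum q (z.1 + z.2 + 2)) with hg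
  have hswap : ∑' w : ℕ × ℕ, g ((Equiv.prodComm ℕ ℕ) w) = ∑' z, g z :=
    Equiv.tsum_eq (Equiv.prodComm ℕ ℕ) g
  rw [← hswap]
  have hgs : Summable (fun w : ℕ × ℕ => g ((Equiv.prodComm ℕ ℕ) w)) := by
    have := (summable_g1 hq0 hq1 v).prod_symm
    simpa [hg] using this
  have hpt : ∀ k l : ℕ, g ((Equiv.prodComm ℕ ℕ) (k, l))
      = tt q (v + 2) (k + 1) * (1 / qnum q (l + 1) - 1 / qnum q (l + k + 2)) := by
    intro k l
    rw [hg]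
    simp only [Equiv.prodComm_apply, Prod.swap_prod_mk]
  have hinner : ∀ k : ℕ, Summable fun l => g ((Equiv.prodComm ℕ ℕ) (k, l)) := by
    intro k
    refine summable_geom_aux hq0 hq1 (tt q (v + 2) (k + 1)) (fun l => ?_) (fun l => ?_)
    · rw [hpt k l, show l + k + 2 = k + l + 2 by omega]
      exact mul_nonneg (tt_nonneg hq0 hq1 _ _) (inv_qnum_diff_nonneg hq0 hq1 k l)
    · rw [hpt k l, show l + k + 2 = k + l + 2 by omega, mul_comm (tt q (v+2) (k+1)) (q ^ l)]
      exact le_trans (le_of_eq (mul_comm _ _))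
        (mul_le_mul_of_nonneg_right (inv_qnum_diff_le hq0 hq1 k l) (tt_nonneg hq0 hq1 _ _))
  rw [Summable.tsum_prod' hgs hinner]
  refine tsum_congr fun k => ?_
  rw [tsum_congr (hpt k), tsum_mul_left, telescope hq0 hq1 k]

/-- The depth-two q-analog of the sum theorem. -/
lemma sum_theorem (hq0 : 0 < q) (hq1 : q < 1) (v : ℕ) :
    ∑ a ∈ Finset.Icc 2 (v + 2), qzeta2 q a (v + 3 - a) = qzeta q (v + 3) := by
  have h1 : ∑ a ∈ Finset.Icc 2 (v+2), qzeta2 q a (v+3-a)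
      = ∑' z : ℕ × ℕ, ∑ a ∈ Finset.Icc 2 (v+2), tt q a (z.1+z.2+2) * tt q (v+3-a) (z.2+1) := by
    rw [Finset.sum_congr rfl (fun a _ => qzeta2_eq' a (v+3-a))]
    exact (Summable.tsum_finsetSum (fun a ha => summable_z hq0 hq1 (Finset.mem_Icc.1 ha).1 _)).symm
  have h2 : ∀ z : ℕ × ℕ, ∑ a ∈ Finset.Icc 2 (v+2), tt q a (z.1+z.2+2) * tt q (v+3-a) (z.2+1)
      = tt q (v + 2) (z.2 + 1) * (1 / qnum q (z.1 + 1) - 1 / qnum q (z.1 + z.2 + 2))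
        - tt q (v + 2) (z.1 + z.2 + 2) * cf q z.1 := by
    intro z
    have e0 : Finset.Icc 2 (v+2) = Finset.Ico 2 (v+3) := by
      exact (Finset.Ico_add_one_right_eq_Icc 2 (v+2)).symm
    have e3 : z.1 + z.2 + 2 = z.2 + z.1 + 2 := by omega
    rw [e0, Finset.sum_Ico_eq_sum_range, show v+3-2 = v+1 by omega]
    rw [Finset.sum_congr rfl (fun i _ => by
      rw [show v+3-(2+i) = v+1-i by omega, e3])]
    rw [geom_core hq0 hq1 z.2 z.1 v, pfA hq0 hq1 v z.2 z.1, pfB hq0 hq1 v z.2 z.1, ← e3]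
  rw [h1, tsum_congr h2,
    Summable.tsum_sub (summable_g1 hq0 hq1 v) (summable_g2 hq0 hq1 v),
    eval_g1 hq0 hq1 v, eval_g2 hq0 hq1 v]
  have hs1 := summable_tt_mul_sum hq0 hq1 v (fun k => k) (fun k => Nat.le_succ k)
  have hs2 := summable_tt_mul_cf hq0 hq1 v
  have hsplit : ∀ k : ℕ, tt q (v+2) (k+1) * ∑ i ∈ Finset.range (k+1), cf q i
      = tt q (v+2) (k+1) * ∑ i ∈ Finset.range k, cf q i + tt q (v+2) (k+1) * cf q k := by
    intro k; rw [Finset.sum_range_succ]; ring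
  rw [tsum_congr hsplit, Summable.tsum_add hs1 hs2, add_sub_cancel_left,
    tsum_congr (fun k => pfFin hq0 hq1 v k), qzeta_eq]

end QE

open QE in
/-- The q-analog of Euler's evaluation of ζ(m,1). -/
theorem q_euler_formula (q : ℝ) (hq0 : 0 < q) (hq1 : q < 1) (m : ℕ) (hm : 2 ≤ m) :
    2 * qzeta2 q m 1
      = (m : ℝ) * qzeta q (m + 1) + (1 - q) * ((m : ℝ) - 2) * qzeta q m
          - ∑ k ∈ Finset.Icc 1 (m - 2), qzeta q (m - k) * qzeta q (k + 1) := by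
  obtain ⟨n, rfl⟩ : ∃ n, m = n + 2 := ⟨m - 2, by omega⟩
  rw [show n + 2 - 2 = n by omega]
  -- stuffle on each summand
  have hsum : ∑ k ∈ Finset.Icc 1 n, qzeta q (n + 2 - k) * qzeta q (k + 1)
      = (∑ k ∈ Finset.Icc 1 n, qzeta2 q (n + 2 - k) (k + 1))
        + (∑ k ∈ Finset.Icc 1 n, qzeta2 q (k + 1) (n + 2 - k))
        + (n : ℝ) * (qzeta q (n + 3) + (1 - q) * qzeta q (n + 2)) := by
    have h1 : ∀ k ∈ Finset.Icc 1 n, qzeta q (n + 2 - k) * qzeta q (k + 1)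
        = qzeta2 q (n + 2 - k) (k + 1) + qzeta2 q (k + 1) (n + 2 - k)
          + (qzeta q (n + 3) + (1 - q) * qzeta q (n + 2)) := by
      intro k hk
      obtain ⟨hk1, hk2⟩ := Finset.mem_Icc.1 hk
      have h := stuffle hq0 hq1 (a := n + 2 - k) (b := k + 1) (by omega) (by omega)
      rw [h, show n + 2 - k + (k + 1) - 1 = n + 2 by omega,
        show n + 2 - k + (k + 1) = n + 3 by omega]
      ring
    rw [Finset.sum_congr rfl h1, Finset.sum_add_distrib, Finset.sum_add_distrib,
      Finset.sum_const, Nat.card_Icc, nsmul_eq_mul]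
    norm_num
  -- reindex both double-zeta sums to ∑_{a ∈ Icc 2 (n+1)} qzeta2 q a (n+3-a)
  have hre1 : ∑ k ∈ Finset.Icc 1 n, qzeta2 q (n + 2 - k) (k + 1)
      = ∑ a ∈ Finset.Icc 2 (n + 1), qzeta2 q a (n + 3 - a) := by
    refine Finset.sum_nbij' (fun k => n + 2 - k) (fun a => n + 2 - a)
      (fun k hk => ?_) (fun a ha => ?_) (fun k hk => ?_) (fun a ha => ?_) (fun k hk => ?_)
    · simp only [Finset.mem_Icc] at *; omega
    · simp only [Finset.mem_Icc] at *; omega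
    · simp only [Finset.mem_Icc] at *; omega
    · simp only [Finset.mem_Icc] at *; omega
    · simp only [Finset.mem_Icc] at hk
      rw [show n + 3 - (n + 2 - k) = k + 1 by omega]
  have hre2 : ∑ k ∈ Finset.Icc 1 n, qzeta2 q (k + 1) (n + 2 - k)
      = ∑ a ∈ Finset.Icc 2 (n + 1), qzeta2 q a (n + 3 - a) := by
    refine Finset.sum_nbij' (fun k => k + 1) (fun a => a - 1)
      (fun k hk => ?_) (fun a ha => ?_) (fun k hk => ?_) (fun a ha => ?_) (fun k hk => ?_)
    · simp only [Finset.mem_Icc] at *; omega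
    · simp only [Finset.mem_Icc] at *; omega
    · simp only [Finset.mem_Icc] at *; omega
    · simp only [Finset.mem_Icc] at *; omega
    · simp only [Finset.mem_Icc] at hk
      rw [show n + 3 - (k + 1) = n + 2 - k by omega]
  -- the sum theorem with w = n+3
  have hst := sum_theorem hq0 hq1 (v := n)
  have hsplit : ∑ a ∈ Finset.Icc 2 (n + 2), qzeta2 q a (n + 3 - a)
      = (∑ a ∈ Finset.Icc 2 (n + 1), qzeta2 q a (n + 3 - a)) + qzeta2 q (n + 2) 1 := by
    rw [Finset.sum_Icc_succ_top (by omega)]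
    rw [show n + 3 - (n + 2) = 1 by omega]
  have hT : ∑ a ∈ Finset.Icc 2 (n + 1), qzeta2 q a (n + 3 - a)
      = qzeta q (n + 3) - qzeta2 q (n + 2) 1 := by
    rw [eq_sub_iff_add_eq, ← hsplit, hst]
  rw [hsum, hre1, hre2, hT, show n + 2 + 1 = n + 3 by omega]
  push_cast
  ring
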